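/- The PEPS state Φ_BT is nonzero if and only if the bounded tiling instance (Γ, T, γ) admits a valid tiling. -/

import Mathlib

/-- A tile over the colour set `Fin k`: a 4-tuple of colours `(u, d, l, r)`. -/
abbrev Tile (k : ℕ) := Fin k × Fin k × Fin k × Fin k

namespace Tile
def u {k : ℕ} (w : Tile k) : Fin k := w.1
def d {k : ℕ} (w : Tile k) : Fin k := w.2.1
def l {k : ℕ} (w : Tile k) : Fin k := w.2.2.1
def r {k : ℕ} (w : Tile k) : Fin k := w.2.2.2
end Tile

/-- A boundary condition on the `m × n` grid: a colour for each boundary edge. -/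
structure BC (k m n : ℕ) where
  top : Fin n → Fin k
  bot : Fin n → Fin k
  left : Fin m → Fin k
  right : Fin m → Fin k

/-- A configuration assigns a 4-tuple of colours to each plaquette of the `m × n` grid
(first index: the row, increasing downwards; second index: the column). -/
abbrev Config (k m n : ℕ) := Fin m × Fin n → Tile k

/-- A configuration is a valid tiling for `(T, γ)`: every plaquette carries a tile of `T`,
adjacent plaquettes agree on the shared edge, and boundary edges carry the prescribed
colours. -/
def IsValidTiling {k m n : ℕ} (T : Finset (Tile k)) (γ : BC k m n)
    (c : Config k m n) : Prop :=
  (∀ p, c p ∈ T) ∧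
  (∀ (i : Fin m) (j : Fin n) (h : (j : ℕ) + 1 < n),
    (c (i, j)).r = (c (i, ⟨(j : ℕ) + 1, h⟩)).l) ∧
  (∀ (i : Fin m) (j : Fin n) (h : (i : ℕ) + 1 < m),
    (c (i, j)).d = (c (⟨(i : ℕ) + 1, h⟩, j)).u) ∧
  (∀ (hm : 0 < m) (j : Fin n), (c (⟨0, hm⟩, j)).u = γ.top j) ∧
  (∀ (hm : 0 < m) (j : Fin n), (c (⟨m - 1, by omega⟩, j)).d = γ.bot j) ∧
  (∀ (hn : 0 < n) (i : Fin m), (c (i, ⟨0, hn⟩)).l = γ.left i) ∧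
  (∀ (hn : 0 < n) (i : Fin m), (c (i, ⟨n - 1, by omega⟩)).r = γ.right i)

/-- The energy of a configuration: the number of violated constraints.  There is one
constraint for each pair of adjacent plaquettes (both tiles belong to `T` and match on the
shared edge) and one constraint for each boundary plaquette and boundary edge of it
(the tile belongs to `T` and shows the prescribed colour on that boundary edge). -/
def energy {k m n : ℕ} (T : Finset (Tile k)) (γ : BC k m n) (c : Config k m n) : ℕ :=
  -- horizontally adjacent pairs
  (∑ i : Fin m, ∑ j : Fin n,
    if h : (j : ℕ) + 1 < n then
      (if c (i, j) ∈ T ∧ c (i, ⟨(j : ℕ) + 1, h⟩) ∈ T ∧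
          (c (i, j)).r = (c (i, ⟨(j : ℕ) + 1, h⟩)).l then 0 else 1)
    else 0) +
  -- vertically adjacent pairs
  (∑ i : Fin m, ∑ j : Fin n,
    if h : (i : ℕ) + 1 < m then
      (if c (i, j) ∈ T ∧ c (⟨(i : ℕ) + 1, h⟩, j) ∈ T ∧
          (c (i, j)).d = (c (⟨(i : ℕ) + 1, h⟩, j)).u then 0 else 1)
    else 0) +
  -- top and bottom boundary constraints
  (if hm : 0 < m then
    (∑ j : Fin n, if c (⟨0, hm⟩, j) ∈ T ∧ (c (⟨0, hm⟩, j)).u = γ.top j then 0 else 1) +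
    (∑ j : Fin n, if c (⟨m - 1, by omega⟩, j) ∈ T ∧
        (c (⟨m - 1, by omega⟩, j)).d = γ.bot j then 0 else 1)
  else 0) +
  -- left and right boundary constraints
  (if hn : 0 < n then
    (∑ i : Fin m, if c (i, ⟨0, hn⟩) ∈ T ∧ (c (i, ⟨0, hn⟩)).l = γ.left i then 0 else 1) +
    (∑ i : Fin m, if c (i, ⟨n - 1, by omega⟩) ∈ T ∧
        (c (i, ⟨n - 1, by omega⟩)).r = γ.right i then 0 else 1)
  else 0)


/-- The entry of the PEPS tensor `A_T` with virtual indices `w = (u,d,l,r)` and physical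
index `s`: it is `1` if `w ∈ T` and `s = w`, and `0` otherwise. -/
noncomputable def ATentry {k : ℕ} (T : Finset (Tile k)) (w s : Tile k) : ℂ :=
  if w ∈ T ∧ s = w then 1 else 0

/-- The 4-tuple of colours on the edges of the plaquette `p`, determined by the boundary
condition `γ` on boundary edges, and by the assignments `eH` (interior edges shared by
horizontally adjacent plaquettes) and `eV` (interior edges shared by vertically adjacent
plaquettes) on interior edges. -/
def plaqColours {k m n : ℕ} (γ : BC k m n)
    (eH : Fin m × Fin (n - 1) → Fin k) (eV : Fin (m - 1) × Fin n → Fin k)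
    (p : Fin m × Fin n) : Tile k :=
  ( if _h : (p.1 : ℕ) = 0 then γ.top p.2
      else eV (⟨(p.1 : ℕ) - 1, by have := p.1.isLt; omega⟩, p.2),
    if _h : (p.1 : ℕ) = m - 1 then γ.bot p.2
      else eV (⟨(p.1 : ℕ), by have := p.1.isLt; omega⟩, p.2),
    if _h : (p.2 : ℕ) = 0 then γ.left p.1
      else eH (p.1, ⟨(p.2 : ℕ) - 1, by have := p.2.isLt; omega⟩),
    if _h : (p.2 : ℕ) = n - 1 then γ.right p.1
      else eH (p.1, ⟨(p.2 : ℕ), by have := p.2.isLt; omega⟩) )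

/-- The coefficient of the PEPS state `Φ_BT` at the physical basis vector indexed by
`s : plaquettes → Γ⁴`: the sum over all assignments of a colour to every interior edge
(boundary edges being fixed by `γ`) of the product over all plaquettes of the corresponding
entry of the tensor `A_T`. -/
noncomputable def pepsCoeff {k m n : ℕ} (T : Finset (Tile k)) (γ : BC k m n)
    (s : Config k m n) : ℂ :=
  ∑ eH : Fin m × Fin (n - 1) → Fin k, ∑ eV : Fin (m - 1) × Fin n → Fin k,
    ∏ p : Fin m × Fin n, ATentry T (plaqColours γ eH eV p) (s p)

/-- The PEPS state `Φ_BT` as a vector in `ℂ^{(Γ⁴)^{m·n}}`. -/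
noncomputable def PhiBT {k m n : ℕ} (T : Finset (Tile k)) (γ : BC k m n) :
    Config k m n → ℂ :=
  fun s => pepsCoeff T γ s

lemma validTiling_plaqColours {k m n : ℕ} (T : Finset (Tile k)) (γ : BC k m n)
    (eH : Fin m × Fin (n - 1) → Fin k) (eV : Fin (m - 1) × Fin n → Fin k)
    (hT : ∀ p, plaqColours γ eH eV p ∈ T) :
    IsValidTiling T γ (plaqColours γ eH eV) := by
  refine ⟨hT, ?_, ?_, ?_, ?_, ?_, ?_⟩
  · intro i j h
    show (plaqColours γ eH eV (i, j)).2.2.2 = (plaqColours γ eH eV (i, ⟨(j:ℕ)+1, h⟩)).2.2.1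
    simp only [plaqColours]
    rw [dif_neg (by omega : ¬ (j:ℕ) = n - 1),
        dif_neg (by simp : ¬ ((⟨(j:ℕ)+1, h⟩ : Fin n) : ℕ) = 0)]
    exact congrArg eH (Prod.ext rfl (Fin.ext (by simp)))
  · intro i j h
    show (plaqColours γ eH eV (i, j)).2.1 = (plaqColours γ eH eV (⟨(i:ℕ)+1, h⟩, j)).1
    simp only [plaqColours]
    rw [dif_neg (by omega : ¬ (i:ℕ) = m - 1),
        dif_neg (by simp : ¬ ((⟨(i:ℕ)+1, h⟩ : Fin m) : ℕ) = 0)]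
    exact congrArg eV (Prod.ext (Fin.ext (by simp)) rfl)
  · intro hm j
    show (plaqColours γ eH eV (⟨0, hm⟩, j)).1 = γ.top j
    simp [plaqColours]
  · intro hm j
    show (plaqColours γ eH eV (⟨m-1, by omega⟩, j)).2.1 = γ.bot j
    simp [plaqColours]
  · intro hn i
    show (plaqColours γ eH eV (i, ⟨0, hn⟩)).2.2.1 = γ.left i
    simp [plaqColours]
  · intro hn i
    show (plaqColours γ eH eV (i, ⟨n-1, by omega⟩)).2.2.2 = γ.right i
    simp [plaqColours]

lemma plaqColours_of_valid {k m n : ℕ} (T : Finset (Tile k)) (γ : BC k m n)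
    (c : Config k m n) (hc : IsValidTiling T γ c) :
    ∃ eH eV, plaqColours γ eH eV = c := by
  obtain ⟨hmem, hH, hV, htop, hbot, hleft, hright⟩ := hc
  refine ⟨fun q => (c (q.1, ⟨(q.2 : ℕ), by have := q.2.isLt; omega⟩)).r,
          fun q => (c (⟨(q.1 : ℕ), by have := q.1.isLt; omega⟩, q.2)).d, ?_⟩
  funext p
  obtain ⟨i, j⟩ := p
  have hm : 0 < m := i.pos
  have hn : 0 < n := j.pos
  refine Prod.ext ?_ (Prod.ext ?_ (Prod.ext ?_ ?_))
  · show (if _ : (i:ℕ) = 0 then γ.top j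
      else (c (⟨(i:ℕ)-1, by have := i.isLt; omega⟩, j)).d) = (c (i, j)).u
    split_ifs with h0
    · have hi : (⟨0, hm⟩ : Fin m) = i := Fin.ext h0.symm
      rw [← htop hm j, hi]
    · have h' : ((i:ℕ) - 1) + 1 < m := by have := i.isLt; omega
      rw [hV ⟨(i:ℕ)-1, by have := i.isLt; omega⟩ j h']
      have hi : (⟨((i:ℕ)-1)+1, h'⟩ : Fin m) = i := Fin.ext (show ((i:ℕ)-1)+1 = (i:ℕ) by omega)
      rw [hi]
  · show (if _ : (i:ℕ) = m - 1 then γ.bot j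
      else (c (⟨(i:ℕ), i.isLt⟩, j)).d) = (c (i, j)).d
    split_ifs with h0
    · have hi : (⟨m - 1, by omega⟩ : Fin m) = i := Fin.ext h0.symm
      rw [← hbot hm j, hi]
    · have hi : (⟨(i:ℕ), i.isLt⟩ : Fin m) = i := Fin.ext rfl
      rw [hi]
  · show (if _ : (j:ℕ) = 0 then γ.left i
      else (c (i, ⟨(j:ℕ)-1, by have := j.isLt; omega⟩)).r) = (c (i, j)).l
    split_ifs with h0
    · have hj : (⟨0, hn⟩ : Fin n) = j := Fin.ext h0.symm
      rw [← hleft hn i, hj]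
    · have h' : ((j:ℕ) - 1) + 1 < n := by have := j.isLt; omega
      rw [hH i ⟨(j:ℕ)-1, by have := j.isLt; omega⟩ h']
      have hj : (⟨((j:ℕ)-1)+1, h'⟩ : Fin n) = j := Fin.ext (show ((j:ℕ)-1)+1 = (j:ℕ) by omega)
      rw [hj]
  · show (if _ : (j:ℕ) = n - 1 then γ.right i
      else (c (i, ⟨(j:ℕ), j.isLt⟩)).r) = (c (i, j)).r
    split_ifs with h0
    · have hj : (⟨n - 1, by omega⟩ : Fin n) = j := Fin.ext h0.symm
      rw [← hright hn i, hj]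
    · have hj : (⟨(j:ℕ), j.isLt⟩ : Fin n) = j := Fin.ext rfl
      rw [hj]

lemma pepsCoeff_ne_zero_iff {k m n : ℕ} (T : Finset (Tile k)) (γ : BC k m n)
    (s : Config k m n) :
    pepsCoeff T γ s ≠ 0 ↔ ∃ eH eV, ∀ p,
      plaqColours γ eH eV p ∈ T ∧ s p = plaqColours γ eH eV p := by
  classical
  have hprod : ∀ (eH : Fin m × Fin (n-1) → Fin k) (eV : Fin (m-1) × Fin n → Fin k),
      (∏ p : Fin m × Fin n, ATentry T (plaqColours γ eH eV p) (s p)) =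
      if (∀ p, plaqColours γ eH eV p ∈ T ∧ s p = plaqColours γ eH eV p)
        then (1 : ℂ) else 0 := by
    intro eH eV
    unfold ATentry
    rw [Finset.prod_boole]
    simp
  have hkey : pepsCoeff T γ s =
      ((∑ eH : Fin m × Fin (n-1) → Fin k, ∑ eV : Fin (m-1) × Fin n → Fin k,
        if (∀ p, plaqColours γ eH eV p ∈ T ∧ s p = plaqColours γ eH eV p)
          then (1:ℕ) else 0 : ℕ) : ℂ) := by
    unfold pepsCoeff
    push_cast
    exact Finset.sum_congr rfl fun eH _ => Finset.sum_congr rfl fun eV _ => by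
      rw [hprod]
  rw [hkey, Nat.cast_ne_zero]
  constructor
  · intro h
    by_contra hcon
    push_neg at hcon
    apply h
    refine Finset.sum_eq_zero fun eH _ => Finset.sum_eq_zero fun eV _ => ?_
    exact if_neg (by push_neg; exact hcon eH eV)
  · rintro ⟨eH, eV, h⟩ h0
    have h1 := Finset.sum_eq_zero_iff.mp h0 eH (Finset.mem_univ _)
    have h2 := Finset.sum_eq_zero_iff.mp h1 eV (Finset.mem_univ _)
    rw [if_pos h] at h2
    exact one_ne_zero h2

/-- The PEPS state `Φ_BT` is nonzero if and only if the bounded tiling instance `(Γ, T, γ)`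
admits a valid tiling. -/
theorem PhiBT_ne_zero_iff_validTiling (k m n : ℕ) (T : Finset (Tile k)) (γ : BC k m n) :
    PhiBT T γ ≠ 0 ↔ ∃ c : Config k m n, IsValidTiling T γ c := by
  rw [Function.ne_iff]
  constructor
  · rintro ⟨s, hs⟩
    obtain ⟨eH, eV, h⟩ := (pepsCoeff_ne_zero_iff T γ s).mp (by simpa [PhiBT] using hs)
    exact ⟨plaqColours γ eH eV, validTiling_plaqColours T γ eH eV (fun p => (h p).1)⟩
  · rintro ⟨c, hc⟩
    obtain ⟨eH, eV, hE⟩ := plaqColours_of_valid T γ c hc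
    refine ⟨c, ?_⟩
    have : pepsCoeff T γ c ≠ 0 := by
      refine (pepsCoeff_ne_zero_iff T γ c).mpr ⟨eH, eV, fun p => ?_⟩
      rw [hE]
      exact ⟨hc.1 p, rfl⟩
    simpa [PhiBT] using this
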